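/- Let k be a positive integer and ε = 1/(2^k − 1). Then [−1, 1] ⊆ ⋃_{δ ∈ {±1}} ⋃_{j=1}^{k} [δ(1 − (2^j − 1)ε) − 2^{j−1}ε, δ(1 − (2^j − 1)ε) + 2^{j−1}ε], and for every δ ∈ {±1} and j ∈ {1,…,k}, the interval scaled by 2 about its center satisfies [δ(1 − (2^j − 1)ε) − 2^{j}ε, δ(1 − (2^j − 1)ε) + 2^{j}ε] ⊆ [−(1+ε), 1+ε]. -/
import Mathlib

private lemma dyadic_aux (k : ℕ) (hk : 1 ≤ k) (y : ℝ) (h1 : 1 ≤ y) (h2 : y ≤ 2 ^ k) :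
    ∃ j : ℕ, 1 ≤ j ∧ j ≤ k ∧ (2 : ℝ) ^ (j - 1) ≤ y ∧ y ≤ 2 ^ j := by
  induction k with
  | zero => omega
  | succ n ih =>
    rcases le_or_gt y (2 ^ n) with h | h
    · rcases Nat.eq_zero_or_pos n with rfl | hn
      · exact ⟨1, le_refl _, le_refl _, by simpa using h1, by norm_num at h ⊢; linarith⟩
      · obtain ⟨j, hj1, hj2, hj3, hj4⟩ := ih hn h
        exact ⟨j, hj1, hj2.trans (Nat.le_succ n), hj3, hj4⟩
    · exact ⟨n + 1, by omega, le_refl _, by simpa using h.le, h2⟩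

private lemma cover_pos (k : ℕ) (hk : 1 ≤ k) (ε : ℝ) (hεpos : 0 < ε)
    (hεe : ((2 : ℝ) ^ k - 1) * ε = 1) (x : ℝ) (hx0 : 0 ≤ x) (hx1 : x ≤ 1) :
    ∃ j : ℕ, 1 ≤ j ∧ j ≤ k ∧
      1 - ((2 : ℝ) ^ j - 1) * ε - 2 ^ (j - 1) * ε ≤ x ∧
      x ≤ 1 - ((2 : ℝ) ^ j - 1) * ε + 2 ^ (j - 1) * ε := by
  set y : ℝ := (1 - x) / ε + 1 with hy
  have h1 : 1 ≤ y := by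
    have : 0 ≤ (1 - x) / ε := div_nonneg (by linarith) hεpos.le
    rw [hy]; linarith
  have h2 : y ≤ 2 ^ k := by
    rw [hy]
    have : (1 - x) / ε ≤ (2 : ℝ) ^ k - 1 := by
      rw [div_le_iff₀ hεpos]
      nlinarith
    linarith
  obtain ⟨j, hj1, hj2, hj3, hj4⟩ := dyadic_aux k hk y h1 h2
  have h2j : (2 : ℝ) ^ j = 2 * 2 ^ (j - 1) := by
    rw [← pow_succ']
    congr 1
    omega
  have hy3 : ((2 : ℝ) ^ (j - 1) - 1) * ε ≤ 1 - x := by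
    have := (le_div_iff₀ hεpos).mp (by rw [hy] at hj3; linarith : (2 : ℝ) ^ (j - 1) - 1 ≤ (1 - x) / ε)
    linarith
  have hy4 : 1 - x ≤ ((2 : ℝ) ^ j - 1) * ε := by
    have := (div_le_iff₀ hεpos).mp (by rw [hy] at hj4; linarith : (1 - x) / ε ≤ (2 : ℝ) ^ j - 1)
    linarith
  refine ⟨j, hj1, hj2, ?_, ?_⟩
  · nlinarith [pow_pos (by norm_num : (0:ℝ) < 2) (j - 1)]
  · nlinarith

theorem stmt_17 (k : ℕ) (hk : 1 ≤ k) (ε : ℝ) (hε : ε = 1 / ((2 : ℝ) ^ k - 1)) :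
    (Set.Icc (-1 : ℝ) 1 ⊆ ⋃ δ ∈ ({-1, 1} : Set ℝ), ⋃ j ∈ Finset.Icc 1 k,
      Set.Icc (δ * (1 - ((2 : ℝ) ^ j - 1) * ε) - 2 ^ (j - 1) * ε)
        (δ * (1 - ((2 : ℝ) ^ j - 1) * ε) + 2 ^ (j - 1) * ε)) ∧
    ∀ δ ∈ ({-1, 1} : Set ℝ), ∀ j : ℕ, 1 ≤ j → j ≤ k →
      Set.Icc (δ * (1 - ((2 : ℝ) ^ j - 1) * ε) - 2 ^ j * ε)
          (δ * (1 - ((2 : ℝ) ^ j - 1) * ε) + 2 ^ j * ε)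
        ⊆ Set.Icc (-(1 + ε)) (1 + ε) := by
  have h2k : (2 : ℝ) ^ k ≥ 2 := by
    calc (2 : ℝ) ^ k ≥ 2 ^ 1 := pow_le_pow_right₀ (by norm_num) hk
    _ = 2 := by norm_num
  have hden : (0 : ℝ) < (2 : ℝ) ^ k - 1 := by linarith
  have hεpos : 0 < ε := by rw [hε]; positivity
  have hεe : ((2 : ℝ) ^ k - 1) * ε = 1 := by
    rw [hε]; field_simp
  constructor
  · intro x hx
    obtain ⟨hx1, hx2⟩ := hx
    rcases le_or_gt 0 x with hx0 | hx0
    · obtain ⟨j, hj1, hj2, hl, hr⟩ := cover_pos k hk ε hεpos hεe x hx0 hx2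
      refine Set.mem_iUnion₂.mpr ⟨1, by simp, Set.mem_iUnion₂.mpr ⟨j, Finset.mem_Icc.mpr ⟨hj1, hj2⟩, ?_⟩⟩
      constructor <;> [linarith; linarith]
    · obtain ⟨j, hj1, hj2, hl, hr⟩ := cover_pos k hk ε hεpos hεe (-x) (by linarith) (by linarith)
      refine Set.mem_iUnion₂.mpr ⟨-1, by simp, Set.mem_iUnion₂.mpr ⟨j, Finset.mem_Icc.mpr ⟨hj1, hj2⟩, ?_⟩⟩
      constructor <;> [linarith; linarith]
  · intro δ hδ j hj1 hj2 x hx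
    obtain ⟨hl, hr⟩ := hx
    have hmono : (2 : ℝ) ^ j ≤ 2 ^ k := pow_le_pow_right₀ (by norm_num) hj2
    have hjpos : (0 : ℝ) < 2 ^ j := by positivity
    have key : ((2 : ℝ) ^ j - 1) * ε ≤ 1 := by
      calc ((2 : ℝ) ^ j - 1) * ε ≤ ((2 : ℝ) ^ k - 1) * ε := by nlinarith
      _ = 1 := hεe
    rcases hδ with rfl | rfl
    · constructor <;> nlinarith
    · constructor <;> nlinarith
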